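/- Let U be a nonempty finite linearly ordered type, let A and B be nonempty finite subsets of U, and let σ₁, …, σ_k be independent, uniformly random permutations of U. Then the expected number of indices i ∈ {1, …, k} for which min over a ∈ A of σ_i(a) equals min over b ∈ B of σ_i(b) is exactly k · |A ∩ B| / |A ∪ B|. -/

import Mathlib

open Finset

namespace MinhashAux

variable {U : Type*} [Fintype U] [LinearOrder U]

lemma swap_mem {S : Finset U} {x y b : U} (hx : x ∈ S) (hy : y ∈ S) (hb : b ∈ S) :
    Equiv.swap x y b ∈ S := by
  rcases eq_or_ne b x with rfl | hbx
  · simpa [Equiv.swap_apply_left] using hy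
  rcases eq_or_ne b y with rfl | hby
  · simpa [Equiv.swap_apply_right] using hx
  · simpa [Equiv.swap_apply_of_ne_of_ne hbx hby] using hb

lemma inf'_mul_swap {S : Finset U} (hS : S.Nonempty) {x y : U} (hx : x ∈ S) (hy : y ∈ S)
    (σ : Equiv.Perm U) :
    S.inf' hS ⇑(σ * Equiv.swap x y) = S.inf' hS ⇑σ := by
  apply le_antisymm
  · rw [Finset.le_inf'_iff]
    intro b hb
    have := Finset.inf'_le ⇑(σ * Equiv.swap x y) (swap_mem hx hy hb)
    rw [Equiv.Perm.mul_apply, Equiv.swap_apply_self] at this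
    exact this
  · rw [Finset.le_inf'_iff]
    intro b hb
    have := Finset.inf'_le ⇑σ (swap_mem hx hy hb)
    simpa only [Equiv.Perm.coe_mul, Function.comp_apply, Equiv.swap_apply_self] using this

lemma card_filter_eq_inf' {S : Finset U} (hS : S.Nonempty) (σ : Equiv.Perm U) :
    (S.filter fun x => σ x = S.inf' hS ⇑σ).card = 1 := by
  obtain ⟨x₀, hx₀, hval⟩ := Finset.exists_mem_eq_inf' hS ⇑σ
  rw [Finset.card_eq_one]
  refine ⟨x₀, ?_⟩
  ext z
  simp only [mem_filter, mem_singleton]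
  constructor
  · rintro ⟨hz, he⟩
    exact σ.injective (he.trans hval)
  · rintro rfl
    exact ⟨hx₀, hval.symm⟩

lemma indicator_agree (A B : Finset U) (hA : A.Nonempty) (hB : B.Nonempty)
    (hS : (A ∪ B).Nonempty) (σ : Equiv.Perm U) :
    (if A.inf' hA ⇑σ = B.inf' hB ⇑σ then 1 else 0)
      = ((A ∩ B).filter fun x => σ x = (A ∪ B).inf' hS ⇑σ).card := by
  obtain ⟨a₀, ha₀, hva⟩ := Finset.exists_mem_eq_inf' hA ⇑σ
  obtain ⟨b₀, hb₀, hvb⟩ := Finset.exists_mem_eq_inf' hB ⇑σ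
  have hmA : (A ∪ B).inf' hS ⇑σ ≤ A.inf' hA ⇑σ := by
    rw [hva]; exact Finset.inf'_le _ (Finset.mem_union_left _ ha₀)
  have hmB : (A ∪ B).inf' hS ⇑σ ≤ B.inf' hB ⇑σ := by
    rw [hvb]; exact Finset.inf'_le _ (Finset.mem_union_right _ hb₀)
  split_ifs with h
  · symm
    rw [Finset.card_eq_one]
    refine ⟨a₀, ?_⟩
    have hab : a₀ = b₀ := σ.injective (hva.symm.trans (h.trans hvb))
    have hmem : a₀ ∈ A ∩ B := Finset.mem_inter.mpr ⟨ha₀, hab ▸ hb₀⟩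
    have hm : σ a₀ = (A ∪ B).inf' hS ⇑σ := by
      refine le_antisymm (Finset.le_inf' _ _ fun c hc => ?_)
        (Finset.inf'_le _ (Finset.mem_union_left _ ha₀))
      rcases Finset.mem_union.mp hc with hc | hc
      · exact hva ▸ Finset.inf'_le _ hc
      · exact hva ▸ h ▸ Finset.inf'_le _ hc
    ext z
    simp only [mem_filter, mem_singleton]
    constructor
    · rintro ⟨hz, he⟩
      exact σ.injective (he.trans hm.symm)
    · rintro rfl
      exact ⟨hmem, hm⟩
  · symm
    rw [Finset.card_eq_zero, Finset.filter_eq_empty_iff]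
    rintro x hx hval
    obtain ⟨hxA, hxB⟩ := Finset.mem_inter.mp hx
    have h1 : A.inf' hA ⇑σ = (A ∪ B).inf' hS ⇑σ :=
      le_antisymm (hval ▸ Finset.inf'_le _ hxA) hmA
    have h2 : B.inf' hB ⇑σ = (A ∪ B).inf' hS ⇑σ :=
      le_antisymm (hval ▸ Finset.inf'_le _ hxB) hmB
    exact h (h1.trans h2.symm)

lemma count_argmin_const {S : Finset U} (hS : S.Nonempty) {x y : U} (hx : x ∈ S) (hy : y ∈ S) :
    (univ.filter fun σ : Equiv.Perm U => σ x = S.inf' hS ⇑σ).card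
      = (univ.filter fun σ : Equiv.Perm U => σ y = S.inf' hS ⇑σ).card := by
  apply Finset.card_bij' (fun σ _ => σ * Equiv.swap x y) (fun σ _ => σ * Equiv.swap x y)
  · intro σ hσ
    simp only [mem_filter, mem_univ, true_and] at hσ ⊢
    rw [inf'_mul_swap hS hx hy]
    simpa [Equiv.swap_apply_right] using hσ
  · intro σ hσ
    simp only [mem_filter, mem_univ, true_and] at hσ ⊢
    rw [inf'_mul_swap hS hx hy]
    simpa [Equiv.swap_apply_left] using hσ
  · intro σ hσ
    simp [mul_assoc, Equiv.swap_mul_self]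
  · intro σ hσ
    simp [mul_assoc, Equiv.swap_mul_self]

lemma key (A B : Finset U) (hA : A.Nonempty) (hB : B.Nonempty) (hS : (A ∪ B).Nonempty) :
    (univ.filter fun σ : Equiv.Perm U => A.inf' hA ⇑σ = B.inf' hB ⇑σ).card * (A ∪ B).card
      = (A ∩ B).card * Fintype.card (Equiv.Perm U) := by
  classical
  obtain ⟨x₀, hx₀⟩ := id hS
  set c : U → ℕ := fun x => (univ.filter fun σ : Equiv.Perm U => σ x = (A ∪ B).inf' hS ⇑σ).card
    with hc
  have hcount : (univ.filter fun σ : Equiv.Perm U => A.inf' hA ⇑σ = B.inf' hB ⇑σ).card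
      = (A ∩ B).card * c x₀ := by
    rw [Finset.card_filter]
    calc ∑ σ : Equiv.Perm U, (if A.inf' hA ⇑σ = B.inf' hB ⇑σ then 1 else 0)
        = ∑ σ : Equiv.Perm U, ((A ∩ B).filter fun x => σ x = (A ∪ B).inf' hS ⇑σ).card := by
          exact Finset.sum_congr rfl fun σ _ => indicator_agree A B hA hB hS σ
      _ = ∑ x ∈ A ∩ B, c x := by
          simp only [Finset.card_filter, hc]
          exact Finset.sum_comm
      _ = ∑ _x ∈ A ∩ B, c x₀ := Finset.sum_congr rfl fun x hx =>
            count_argmin_const hS (Finset.mem_union_left _ (Finset.mem_inter.mp hx).1) hx₀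
      _ = (A ∩ B).card * c x₀ := by rw [Finset.sum_const, smul_eq_mul]
  have htotal : Fintype.card (Equiv.Perm U) = (A ∪ B).card * c x₀ := by
    calc Fintype.card (Equiv.Perm U)
        = ∑ σ : Equiv.Perm U, ((A ∪ B).filter fun x => σ x = (A ∪ B).inf' hS ⇑σ).card := by
          rw [Fintype.card]
          refine Finset.card_eq_sum_ones _ |>.trans (Finset.sum_congr rfl fun σ _ => ?_)
          exact (card_filter_eq_inf' hS σ).symm
      _ = ∑ x ∈ A ∪ B, c x := by
          simp only [Finset.card_filter, hc]
          exact Finset.sum_comm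
      _ = ∑ _x ∈ A ∪ B, c x₀ := Finset.sum_congr rfl fun x hx => count_argmin_const hS hx hx₀
      _ = (A ∪ B).card * c x₀ := by rw [Finset.sum_const, smul_eq_mul]
  rw [hcount, htotal]
  ring

end MinhashAux

/-- Unbiasedness of the MinHash signature count: for nonempty finite sets
`A, B` in a nonempty finite linearly ordered universe `U`, if
`σ₁, …, σ_k` are independent uniformly random permutations of `U` (modeled as a
uniformly random tuple in `Fin k → Equiv.Perm U`), then the expected number of
indices `i` with `min_{a ∈ A} σᵢ a = min_{b ∈ B} σᵢ b` equals
`k · |A ∩ B| / |A ∪ B|`. -/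
theorem minhash_expected_agreements (U : Type*) [Fintype U] [Nonempty U] [LinearOrder U]
    (A B : Finset U) (hA : A.Nonempty) (hB : B.Nonempty) (k : ℕ) :
    (∑' σ : Fin k → Equiv.Perm U,
        PMF.uniformOfFintype (Fin k → Equiv.Perm U) σ *
          ((Finset.univ.filter fun i : Fin k =>
              A.inf' hA ⇑(σ i) = B.inf' hB ⇑(σ i)).card : ENNReal)) =
      (k : ENNReal) * ((A ∩ B).card : ENNReal) / ((A ∪ B).card : ENNReal) := by
  classical
  have hS : (A ∪ B).Nonempty := hA.mono Finset.subset_union_left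
  set N := Fintype.card (Equiv.Perm U) with hN
  set cnt := (univ.filter fun σ : Equiv.Perm U => A.inf' hA ⇑σ = B.inf' hB ⇑σ).card with hcnt
  have key := MinhashAux.key A B hA hB hS
  rw [tsum_fintype]
  simp only [PMF.uniformOfFintype_apply]
  have hCk : Fintype.card (Fin k → Equiv.Perm U) = N ^ k := by
    simp [Fintype.card_fun, hN]
  -- rewrite card of filter over i as a sum of indicators
  have hstep : ∀ σ : Fin k → Equiv.Perm U,
      (((Finset.univ.filter fun i : Fin k =>
          A.inf' hA ⇑(σ i) = B.inf' hB ⇑(σ i)).card : ℕ) : ENNReal)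
        = ∑ i : Fin k, (if A.inf' hA ⇑(σ i) = B.inf' hB ⇑(σ i) then 1 else 0) := by
    intro σ
    rw [Finset.card_filter]
    push_cast
    simp
  have hNne : (N : ENNReal) ≠ 0 := by
    exact_mod_cast Nat.cast_ne_zero.mpr Fintype.card_ne_zero
  have hNtop : (N : ENNReal) ≠ ⊤ := ENNReal.natCast_ne_top N
  have hSne : ((A ∪ B).card : ENNReal) ≠ 0 := by
    exact_mod_cast Nat.cast_ne_zero.mpr (Finset.card_ne_zero_of_mem (hS.choose_spec))
  have hStop : ((A ∪ B).card : ENNReal) ≠ ⊤ := ENNReal.natCast_ne_top _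
  have hdiv : (cnt : ENNReal) / N = ((A ∩ B).card : ENNReal) / ((A ∪ B).card : ENNReal) := by
    rw [ENNReal.div_eq_div_iff hSne hStop hNne hNtop]
    have := congrArg (Nat.cast : ℕ → ENNReal) key
    push_cast at this
    rw [mul_comm, mul_comm (N : ENNReal)]
    exact this
  have hcoord : ∀ i : Fin k, (∑ σ : Fin k → Equiv.Perm U,
      if A.inf' hA ⇑(σ i) = B.inf' hB ⇑(σ i) then (1:ENNReal) else 0)
      = (N:ENNReal)^(k-1) * cnt := by
    intro i
    have hcF : Fintype.card ({j : Fin k // j ≠ i} → Equiv.Perm U) = N ^ (k-1) := by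
      rw [Fintype.card_fun]
      congr 1
      rw [Fintype.card_subtype_compl, Fintype.card_subtype_eq, Fintype.card_fin]
    rw [← Equiv.sum_comp (Equiv.funSplitAt i (Equiv.Perm U)).symm
      (fun σ => if A.inf' hA ⇑(σ i) = B.inf' hB ⇑(σ i) then (1:ENNReal) else 0)]
    have heval : ∀ p : Equiv.Perm U × ({j : Fin k // j ≠ i} → Equiv.Perm U),
        ((Equiv.funSplitAt i (Equiv.Perm U)).symm p) i = p.1 := by
      intro p
      simp [Equiv.funSplitAt, Equiv.piSplitAt]
    simp only [heval]
    rw [Fintype.sum_prod_type_right]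
    have hinner : (∑ x : Equiv.Perm U,
        if A.inf' hA ⇑x = B.inf' hB ⇑x then (1:ENNReal) else 0) = (cnt : ENNReal) := by
      rw [hcnt, Finset.sum_boole]
    simp only [hinner]
    rw [Finset.sum_const, Finset.card_univ, hcF, nsmul_eq_mul]
    push_cast
    ring
  simp only [hstep]
  rw [← Finset.mul_sum, Finset.sum_comm,
    Finset.sum_congr rfl (fun i _ => hcoord i), Finset.sum_const, Finset.card_univ,
    Fintype.card_fin, hCk]
  rcases Nat.eq_zero_or_pos k with rfl | hk
  · simp
  · obtain ⟨n, rfl⟩ := Nat.exists_eq_succ_of_ne_zero hk.ne'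
    have hpne : ((N:ENNReal)^n) ≠ 0 := pow_ne_zero _ hNne
    have hptop : ((N:ENNReal)^n) ≠ ⊤ := ENNReal.pow_ne_top hNtop
    rw [mul_div_assoc, ← hdiv, div_eq_mul_inv, Nat.succ_sub_one, nsmul_eq_mul]
    push_cast
    rw [pow_succ, ENNReal.mul_inv (Or.inl hpne) (Or.inl hptop)]
    calc ((N:ENNReal)^n)⁻¹ * (N:ENNReal)⁻¹ * (((n:ENNReal)+1) * ((N:ENNReal)^n * (cnt:ENNReal)))
        = (((N:ENNReal)^n)⁻¹ * (N:ENNReal)^n)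
            * (((n:ENNReal)+1) * ((cnt:ENNReal) * (N:ENNReal)⁻¹)) := by ring
      _ = ((n:ENNReal)+1) * ((cnt:ENNReal) * (N:ENNReal)⁻¹) := by
          rw [ENNReal.inv_mul_cancel hpne hptop, one_mul]
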